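/- Let L be the combinatorial graph Laplacian of a connected weighted graph on vertex set V with |V| = N, let V_1 ⊊ V with V_1 and V_1^c nonempty, and write the eigenvalues of L as 0 = λ_0(L) ≤ λ_1(L) ≤ … ≤ λ_{N−1}(L) and those of the Kron reduction K(L,V_1) as λ_0(K) ≤ … ≤ λ_{|V_1|−1}(K). Then for every ℓ ∈ {0, 1, …, |V_1|−1}: λ_ℓ(L) ≤ λ_ℓ(K) ≤ λ_{ℓ + N − |V_1|}(L). -/

import Mathlib

set_option linter.unusedSectionVars false
set_option linter.unusedVariables false
set_option maxHeartbeats 1000000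

open Matrix

noncomputable def deg {n : Type*} [Fintype n] (W : Matrix n n ℝ) (i : n) : ℝ := ∑ j, W i j

noncomputable def lap {n : Type*} [Fintype n] [DecidableEq n] (W : Matrix n n ℝ) :
    Matrix n n ℝ :=
  Matrix.diagonal (deg W) - W

def IsConn {n : Type*} (W : Matrix n n ℝ) : Prop :=
  ∀ i j : n, Relation.ReflTransGen (fun a b => 0 < W a b) i j

def IsBipartiteWith {n : Type*} (W : Matrix n n ℝ) (V1 : Set n) : Prop :=
  ∀ i j, 0 < W i j → (i ∈ V1 ↔ j ∉ V1)

open Classical in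
noncomputable def sortedEigs {n : Type*} [Fintype n] [DecidableEq n] (A : Matrix n n ℝ) :
    Fin (Fintype.card n) → ℝ :=
  if h : A.IsHermitian then
    (fun i => h.eigenvalues ((Fintype.equivFin n).symm i)) ∘
      ⇑(Tuple.sort fun i => h.eigenvalues ((Fintype.equivFin n).symm i))
  else 0

noncomputable def kron {n : Type*} [Fintype n] [DecidableEq n] (L : Matrix n n ℝ)
    (V1 : Finset n) : Matrix ↥V1 ↥V1 ℝ :=
  L.submatrix (Subtype.val : ↥V1 → n) (Subtype.val : ↥V1 → n) -
    L.submatrix (Subtype.val : ↥V1 → n) (Subtype.val : ↥(V1ᶜ) → n) *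
      (L.submatrix (Subtype.val : ↥(V1ᶜ) → n) (Subtype.val : ↥(V1ᶜ) → n))⁻¹ *
      L.submatrix (Subtype.val : ↥(V1ᶜ) → n) (Subtype.val : ↥V1 → n)

noncomputable def wred {m : Type*} [DecidableEq m] (K : Matrix m m ℝ) : Matrix m m ℝ :=
  Matrix.of fun i j => if i = j then 0 else -K i j


open Finset Module

section Core
variable {n : Type*} [Fintype n] [DecidableEq n]

lemma dot_sum_right {d : ℕ} (x : n → ℝ) (f : Fin d → n → ℝ) :
    x ⬝ᵥ (∑ i, f i) = ∑ i, x ⬝ᵥ f i := by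
  simp only [dotProduct, Finset.sum_apply, Finset.mul_sum]
  exact Finset.sum_comm

lemma mulVec_sum' {d : ℕ} (M : Matrix n n ℝ) (f : Fin d → n → ℝ) :
    M *ᵥ (∑ i, f i) = ∑ i, M *ᵥ f i := by
  simpa only [mulVecLin_apply] using map_sum M.mulVecLin f Finset.univ

/-- An orthonormal eigensystem for a real matrix. -/
structure EigSys (M : Matrix n n ℝ) {d : ℕ} (μ : Fin d → ℝ) where
  v : Fin d → (n → ℝ)
  orth : ∀ i j, v i ⬝ᵥ v j = if i = j then (1:ℝ) else 0
  expand : ∀ x : n → ℝ, ∑ i, (v i ⬝ᵥ x) • v i = x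
  eig : ∀ i, M *ᵥ v i = μ i • v i

variable {M : Matrix n n ℝ} {d : ℕ} {μ : Fin d → ℝ}

lemma EigSys.dot_expand (es : EigSys M μ) (x y : n → ℝ) :
    x ⬝ᵥ y = ∑ i, (es.v i ⬝ᵥ x) * (es.v i ⬝ᵥ y) := by
  conv_lhs => rw [← es.expand y]
  rw [dot_sum_right]
  refine Finset.sum_congr rfl fun i _ => ?_
  simp only [dotProduct_smul, smul_eq_mul, dotProduct_comm (es.v i)]
  ring

lemma EigSys.quad_expand (es : EigSys M μ) (x : n → ℝ) :
    x ⬝ᵥ (M *ᵥ x) = ∑ i, μ i * (es.v i ⬝ᵥ x)^2 := by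
  have h : M *ᵥ x = ∑ i, ((es.v i ⬝ᵥ x) * μ i) • es.v i := by
    conv_lhs => rw [← es.expand x]
    rw [mulVec_sum']
    refine Finset.sum_congr rfl fun i _ => ?_
    rw [mulVec_smul, es.eig i, smul_smul]
  rw [h, dot_sum_right]
  refine Finset.sum_congr rfl fun i _ => ?_
  simp only [dotProduct_smul, smul_eq_mul, dotProduct_comm (es.v i)]
  ring

lemma EigSys.coeff_eq_zero (es : EigSys M μ) {s : Finset (Fin d)} {x : n → ℝ}
    (hx : x ∈ Submodule.span ℝ (es.v '' (s : Set (Fin d)))) {j : Fin d} (hj : j ∉ s) :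
    es.v j ⬝ᵥ x = 0 := by
  induction hx using Submodule.span_induction with
  | mem y hy =>
    obtain ⟨i, hi, rfl⟩ := hy
    rw [es.orth j i, if_neg]
    rintro rfl; exact hj hi
  | zero => simp
  | add y z _ _ hy hz => rw [dotProduct_add, hy, hz, add_zero]
  | smul a y _ hy => rw [dotProduct_smul, hy, smul_zero]

lemma EigSys.linearIndependent (es : EigSys M μ) : LinearIndependent ℝ es.v := by
  rw [Fintype.linearIndependent_iff]
  intro g hg j
  have h := congrArg (fun z => es.v j ⬝ᵥ z) hg
  simpa [dot_sum_right, es.orth, Finset.sum_ite_eq' Finset.univ j] using h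

lemma EigSys.finrank_span (es : EigSys M μ) (s : Finset (Fin d)) :
    finrank ℝ (Submodule.span ℝ (es.v '' (s : Set (Fin d)))) = s.card := by
  rw [Set.image_eq_range]
  have li : LinearIndependent ℝ (fun i : (s : Set (Fin d)) => es.v ↑i) :=
    es.linearIndependent.comp _ Subtype.val_injective
  rw [finrank_span_eq_card li]
  simp

end Core

section Core2
variable {n : Type*} [Fintype n] [DecidableEq n]
variable {M : Matrix n n ℝ} {d : ℕ} {μ : Fin d → ℝ}

lemma EigSys.quad_le_on_span (es : EigSys M μ) (hmono : Monotone μ) (k : Fin d) {x : n → ℝ}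
    (hx : x ∈ Submodule.span ℝ (es.v '' ((Finset.Iic k : Finset (Fin d)) : Set (Fin d)))) :
    x ⬝ᵥ (M *ᵥ x) ≤ μ k * (x ⬝ᵥ x) := by
  rw [es.quad_expand, es.dot_expand x x, Finset.mul_sum]
  refine Finset.sum_le_sum fun i _ => ?_
  by_cases hik : i ∈ Finset.Iic k
  · have : μ i ≤ μ k := hmono (Finset.mem_Iic.mp hik)
    have h2 : (0:ℝ) ≤ (es.v i ⬝ᵥ x)^2 := sq_nonneg _
    nlinarith [sq_nonneg (es.v i ⬝ᵥ x)]
  · rw [es.coeff_eq_zero hx hik]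
    simp

lemma EigSys.quad_ge_on_span (es : EigSys M μ) (hmono : Monotone μ) (k : Fin d) {x : n → ℝ}
    (hx : x ∈ Submodule.span ℝ (es.v '' ((Finset.Ici k : Finset (Fin d)) : Set (Fin d)))) :
    μ k * (x ⬝ᵥ x) ≤ x ⬝ᵥ (M *ᵥ x) := by
  rw [es.quad_expand, es.dot_expand x x, Finset.mul_sum]
  refine Finset.sum_le_sum fun i _ => ?_
  by_cases hik : i ∈ Finset.Ici k
  · have : μ k ≤ μ i := hmono (Finset.mem_Ici.mp hik)
    nlinarith [sq_nonneg (es.v i ⬝ᵥ x)]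
  · rw [es.coeff_eq_zero hx hik]
    simp

lemma dotProduct_self_pos {x : n → ℝ} (hx : x ≠ 0) : 0 < x ⬝ᵥ x := by
  have h0 : (0:ℝ) ≤ x ⬝ᵥ x := Finset.sum_nonneg fun i _ => mul_self_nonneg _
  rcases h0.lt_or_eq with h | h
  · exact h
  · exact absurd (dotProduct_self_eq_zero.mp h.symm) hx

/-- Courant-Fischer, upper-bound direction. -/
lemma EigSys.cf_le (es : EigSys M μ) (hmono : Monotone μ) (hd : d = Fintype.card n)
    (k : Fin d) (t : ℝ) (U : Submodule ℝ (n → ℝ))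
    (hU : (k : ℕ) + 1 ≤ finrank ℝ U)
    (hq : ∀ x ∈ U, x ⬝ᵥ (M *ᵥ x) ≤ t * (x ⬝ᵥ x)) : μ k ≤ t := by
  set S := Submodule.span ℝ (es.v '' ((Finset.Ici k : Finset (Fin d)) : Set (Fin d))) with hS
  have hfs : finrank ℝ S = d - k := by rw [hS, es.finrank_span]; exact Fin.card_Ici k
  have hinf : 1 ≤ finrank ℝ (U ⊓ S : Submodule ℝ (n → ℝ)) := by
    have hsum := Submodule.finrank_sup_add_finrank_inf_eq U S
    have htop : finrank ℝ (U ⊔ S : Submodule ℝ (n → ℝ)) ≤ Fintype.card n := by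
      simpa [finrank_pi] using Submodule.finrank_le (U ⊔ S)
    have hk : (k : ℕ) < d := k.2
    omega
  have hne : (U ⊓ S : Submodule ℝ (n → ℝ)) ≠ ⊥ := by
    intro h
    rw [h, finrank_bot] at hinf
    omega
  obtain ⟨x, hxUS, hx0⟩ := Submodule.exists_mem_ne_zero_of_ne_bot hne
  have h1 : μ k * (x ⬝ᵥ x) ≤ x ⬝ᵥ (M *ᵥ x) := es.quad_ge_on_span hmono k hxUS.2
  have h2 : x ⬝ᵥ (M *ᵥ x) ≤ t * (x ⬝ᵥ x) := hq x hxUS.1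
  have h3 : 0 < x ⬝ᵥ x := dotProduct_self_pos hx0
  exact le_of_mul_le_mul_right (h1.trans h2) h3

/-- Courant-Fischer, lower-bound direction. -/
lemma EigSys.cf_ge (es : EigSys M μ) (hmono : Monotone μ) (hd : d = Fintype.card n)
    (k : Fin d) (t : ℝ) (U : Submodule ℝ (n → ℝ))
    (hU : d - (k : ℕ) ≤ finrank ℝ U)
    (hq : ∀ x ∈ U, t * (x ⬝ᵥ x) ≤ x ⬝ᵥ (M *ᵥ x)) : t ≤ μ k := by
  set S := Submodule.span ℝ (es.v '' ((Finset.Iic k : Finset (Fin d)) : Set (Fin d))) with hS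
  have hfs : finrank ℝ S = (k : ℕ) + 1 := by rw [hS, es.finrank_span]; exact Fin.card_Iic k
  have hinf : 1 ≤ finrank ℝ (U ⊓ S : Submodule ℝ (n → ℝ)) := by
    have hsum := Submodule.finrank_sup_add_finrank_inf_eq U S
    have htop : finrank ℝ (U ⊔ S : Submodule ℝ (n → ℝ)) ≤ Fintype.card n := by
      simpa [finrank_pi] using Submodule.finrank_le (U ⊔ S)
    have hk : (k : ℕ) < d := k.2
    omega
  have hne : (U ⊓ S : Submodule ℝ (n → ℝ)) ≠ ⊥ := by
    intro h
    rw [h, finrank_bot] at hinf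
    omega
  obtain ⟨x, hxUS, hx0⟩ := Submodule.exists_mem_ne_zero_of_ne_bot hne
  have h1 : x ⬝ᵥ (M *ᵥ x) ≤ μ k * (x ⬝ᵥ x) := es.quad_le_on_span hmono k hxUS.2
  have h2 : t * (x ⬝ᵥ x) ≤ x ⬝ᵥ (M *ᵥ x) := hq x hxUS.1
  have h3 : 0 < x ⬝ᵥ x := dotProduct_self_pos hx0
  exact le_of_mul_le_mul_right (h2.trans h1) h3

/-- Eigenvalues are nonnegative when the quadratic form is. -/
lemma EigSys.nonneg (es : EigSys M μ) (hpsd : ∀ x : n → ℝ, 0 ≤ x ⬝ᵥ (M *ᵥ x)) (i : Fin d) :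
    0 ≤ μ i := by
  have h := hpsd (es.v i)
  rw [es.eig i, dotProduct_smul, smul_eq_mul, es.orth i i, if_pos rfl, mul_one] at h
  exact h

end Core2


section Spectral
open RealInnerProductSpace
variable {n : Type*} [Fintype n] [DecidableEq n]

lemma sortedEigs_eq {A : Matrix n n ℝ} (hA : A.IsHermitian) :
    sortedEigs A = (fun i => hA.eigenvalues ((Fintype.equivFin n).symm i)) ∘
      ⇑(Tuple.sort fun i => hA.eigenvalues ((Fintype.equivFin n).symm i)) := by
  rw [sortedEigs, dif_pos hA]

lemma sortedEigs_monotone {A : Matrix n n ℝ} (hA : A.IsHermitian) :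
    Monotone (sortedEigs A) := by
  rw [sortedEigs_eq hA]
  exact Tuple.monotone_sort _

lemma inner_eq_dot (x y : EuclideanSpace ℝ n) : (inner ℝ x y : ℝ) = x ⬝ᵥ y := by
  simp [PiLp.inner_apply, RCLike.inner_apply, dotProduct, mul_comm]

/-- The sorted orthonormal eigensystem of a real symmetric matrix. -/
noncomputable def IsHermitian.toEigSys {A : Matrix n n ℝ} (hA : A.IsHermitian) :
    EigSys A (sortedEigs A) := by
  set σ := Tuple.sort fun i => hA.eigenvalues ((Fintype.equivFin n).symm i) with hσ
  set e : Fin (Fintype.card n) ≃ n := (σ.trans (Fintype.equivFin n).symm) with he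
  set b := hA.eigenvectorBasis.reindex e.symm with hb
  have hbi : ∀ i, b i = hA.eigenvectorBasis (e i) := fun i => by
    rw [hb, OrthonormalBasis.reindex_apply, Equiv.symm_symm]
  refine ⟨fun i => ⇑(b i), ?_, ?_, ?_⟩
  · intro i j
    have h0 := orthonormal_iff_ite.mp b.orthonormal i j
    rw [inner_eq_dot] at h0
    exact h0
  · intro x
    have h := b.sum_repr' (WithLp.toLp 2 x)
    have h2 : ∀ i, (inner ℝ (b i) (WithLp.toLp 2 x) : ℝ) = (b i : n → ℝ) ⬝ᵥ x :=
      fun i => inner_eq_dot _ _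
    calc ∑ i, ((b i : n → ℝ) ⬝ᵥ x) • (b i : n → ℝ)
        = ∑ i, (inner ℝ (b i) (WithLp.toLp 2 x) : ℝ) • (b i : n → ℝ) := by
          refine Finset.sum_congr rfl fun i _ => ?_; rw [h2]
      _ = x := by
          have h3 := congrArg WithLp.ofLp h
          simpa [WithLp.ofLp_sum, WithLp.ofLp_smul] using h3
  · intro i
    have h := hA.mulVec_eigenvectorBasis (e i)
    rw [sortedEigs_eq hA]
    simp only [Function.comp_apply, hbi]
    have : hA.eigenvalues ((Fintype.equivFin n).symm (σ i)) = hA.eigenvalues (e i) := rfl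
    rw [this]
    exact h

end Spectral


section Pad
variable {n : Type*} [Fintype n] [DecidableEq n]

/-- Extend a vector on a subset by zero. -/
noncomputable def pad (S : Finset n) (x : ↥S → ℝ) : n → ℝ :=
  fun i => if h : i ∈ S then x ⟨i, h⟩ else 0

lemma pad_dot_left (S : Finset n) (x : ↥S → ℝ) (w : n → ℝ) :
    pad S x ⬝ᵥ w = ∑ a : ↥S, x a * w a.val := by
  rw [dotProduct, ← Finset.sum_subset S.subset_univ
    (fun i _ hi => by simp [pad, dif_neg hi]),
    ← Finset.sum_coe_sort S (fun i => pad S x i * w i)]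
  exact Finset.sum_congr rfl fun a _ => by simp [pad]

lemma mulVec_pad (M : Matrix n n ℝ) (T : Finset n) (y : ↥T → ℝ) (i : n) :
    (M *ᵥ pad T y) i = ∑ b : ↥T, M i b.val * y b := by
  rw [mulVec, dotProduct, ← Finset.sum_subset T.subset_univ
    (fun j _ hj => by simp [pad, dif_neg hj]),
    ← Finset.sum_coe_sort T (fun j => M i j * pad T y j)]
  exact Finset.sum_congr rfl fun b _ => by simp [pad]

lemma pad_quad (M : Matrix n n ℝ) (S T : Finset n) (x : ↥S → ℝ) (y : ↥T → ℝ) :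
    pad S x ⬝ᵥ (M *ᵥ pad T y) =
      x ⬝ᵥ ((M.submatrix (Subtype.val : ↥S → n) (Subtype.val : ↥T → n)) *ᵥ y) := by
  rw [pad_dot_left]
  refine Finset.sum_congr rfl fun a _ => ?_
  rw [mulVec_pad]
  rfl

lemma pad_dot_pad (S : Finset n) (x y : ↥S → ℝ) : pad S x ⬝ᵥ pad S y = x ⬝ᵥ y := by
  rw [pad_dot_left]
  exact Finset.sum_congr rfl fun a _ => by simp [pad]

lemma pad_dot_pad_compl (S : Finset n) (x : ↥S → ℝ) (y : ↥(Sᶜ) → ℝ) :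
    pad S x ⬝ᵥ pad Sᶜ y = 0 := by
  rw [pad_dot_left]
  refine Finset.sum_eq_zero fun a _ => ?_
  have : (a : n) ∉ (Sᶜ : Finset n) := by simp [a.2]
  simp [pad, dif_neg this]

lemma pad_add (S : Finset n) (x y : ↥S → ℝ) : pad S (x + y) = pad S x + pad S y := by
  ext i; by_cases h : i ∈ S <;> simp [pad, h]

lemma pad_smul (S : Finset n) (c : ℝ) (x : ↥S → ℝ) : pad S (c • x) = c • pad S x := by
  ext i; by_cases h : i ∈ S <;> simp [pad, h]

lemma pad_eq_zero {S : Finset n} {x : ↥S → ℝ} (h : pad S x = 0) : x = 0 := by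
  ext a
  have := congrFun h a.val
  simpa [pad, a.2] using this

end Pad

section Lap
variable {n : Type*} [Fintype n] [DecidableEq n]

lemma lap_quad (W : Matrix n n ℝ) (hsymm : W.IsSymm) (x : n → ℝ) :
    x ⬝ᵥ (lap W *ᵥ x) = (1/2) * ∑ i, ∑ j, W i j * (x i - x j)^2 := by
  have hW : ∀ i j, W j i = W i j := fun i j => hsymm.apply i j
  have h1 : x ⬝ᵥ (lap W *ᵥ x) =
      (∑ i, ∑ j, W i j * x i ^ 2) - ∑ i, ∑ j, W i j * (x i * x j) := by
    rw [lap, sub_mulVec, dotProduct_sub]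
    congr 1
    · rw [dotProduct]
      refine Finset.sum_congr rfl fun i _ => ?_
      rw [mulVec_diagonal, deg, Finset.sum_mul, Finset.mul_sum]
      exact Finset.sum_congr rfl fun j _ => by ring
    · rw [dotProduct]
      refine Finset.sum_congr rfl fun i _ => ?_
      rw [mulVec, dotProduct, Finset.mul_sum]
      exact Finset.sum_congr rfl fun j _ => by ring
  have hswap : ∑ i, ∑ j, W i j * x j ^ 2 = ∑ i, ∑ j, W i j * x i ^ 2 := by
    rw [Finset.sum_comm]
    exact Finset.sum_congr rfl fun i _ => Finset.sum_congr rfl fun j _ => by rw [hW]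
  have h2 : ∑ i, ∑ j, W i j * (x i - x j)^2 =
      (∑ i, ∑ j, W i j * x i ^ 2) + (∑ i, ∑ j, W i j * x j ^ 2)
        - 2 * ∑ i, ∑ j, W i j * (x i * x j) := by
    rw [Finset.mul_sum, ← Finset.sum_add_distrib, ← Finset.sum_sub_distrib]
    refine Finset.sum_congr rfl fun i _ => ?_
    rw [Finset.mul_sum, ← Finset.sum_add_distrib, ← Finset.sum_sub_distrib]
    exact Finset.sum_congr rfl fun j _ => by ring
  rw [h1, h2, hswap]
  ring

lemma lap_psd (W : Matrix n n ℝ) (hsymm : W.IsSymm) (hnonneg : ∀ i j, 0 ≤ W i j)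
    (x : n → ℝ) : 0 ≤ x ⬝ᵥ (lap W *ᵥ x) := by
  rw [lap_quad W hsymm]
  have : (0:ℝ) ≤ ∑ i, ∑ j, W i j * (x i - x j)^2 :=
    Finset.sum_nonneg fun i _ => Finset.sum_nonneg fun j _ =>
      mul_nonneg (hnonneg i j) (sq_nonneg _)
  linarith

lemma lap_kernel_const (W : Matrix n n ℝ) (hsymm : W.IsSymm) (hnonneg : ∀ i j, 0 ≤ W i j)
    (hconn : IsConn W) {x : n → ℝ} (hx : x ⬝ᵥ (lap W *ᵥ x) = 0) :
    ∀ i j, x i = x j := by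
  rw [lap_quad W hsymm] at hx
  have hterm : ∀ i j, W i j * (x i - x j)^2 = 0 := by
    have h0 : ∑ i, ∑ j, W i j * (x i - x j)^2 = 0 := by linarith
    have h1 := (Finset.sum_eq_zero_iff_of_nonneg (fun i _ =>
      Finset.sum_nonneg fun j _ => mul_nonneg (hnonneg i j) (sq_nonneg _))).mp h0
    intro i j
    have h2 := (Finset.sum_eq_zero_iff_of_nonneg (fun j _ =>
      mul_nonneg (hnonneg i j) (sq_nonneg _))).mp (h1 i (Finset.mem_univ i))
    exact h2 j (Finset.mem_univ j)
  have hedge : ∀ i j, 0 < W i j → x i = x j := by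
    intro i j hW
    have := hterm i j
    have h3 : (x i - x j)^2 = 0 := by
      rcases mul_eq_zero.mp this with h | h
      · exact absurd h (ne_of_gt hW)
      · exact h
    have := sq_eq_zero_iff.mp h3
    linarith
  intro i j
  induction hconn i j with
  | refl => rfl
  | tail _ h ih => exact ih.trans (hedge _ _ h)

end Lap


section Schur
variable {n : Type*} [Fintype n] [DecidableEq n]

lemma isHermitian_of_isSymm {A : Matrix n n ℝ} (h : A.IsSymm) : A.IsHermitian := by
  unfold Matrix.IsHermitian
  ext i j
  rw [conjTranspose_apply, star_trivial]
  exact h.apply i j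

lemma lap_isSymm (W : Matrix n n ℝ) (hsymm : W.IsSymm) : (lap W).IsSymm := by
  rw [Matrix.IsSymm, lap, transpose_sub, diagonal_transpose, hsymm.eq]

lemma lap_isHermitian (W : Matrix n n ℝ) (hsymm : W.IsSymm) : (lap W).IsHermitian :=
  isHermitian_of_isSymm (lap_isSymm W hsymm)

/-- The bottom-right block is positive definite. -/
lemma blockA_posDef {W : Matrix n n ℝ} (hsymm : W.IsSymm) (hnonneg : ∀ i j, 0 ≤ W i j)
    (hconn : IsConn W) (V1 : Finset n) (h1 : V1.Nonempty) :
    ((lap W).submatrix (Subtype.val : ↥(V1ᶜ : Finset n) → n)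
      (Subtype.val : ↥(V1ᶜ : Finset n) → n)).PosDef := by
  refine Matrix.PosDef.of_dotProduct_mulVec_pos ?_ ?_
  · exact (lap_isHermitian W hsymm).submatrix _
  · intro x hx
    rw [star_trivial]
    have hq : x ⬝ᵥ ((lap W).submatrix (Subtype.val : ↥(V1ᶜ : Finset n) → n)
          (Subtype.val : ↥(V1ᶜ : Finset n) → n) *ᵥ x) =
        pad V1ᶜ x ⬝ᵥ (lap W *ᵥ pad V1ᶜ x) := (pad_quad (lap W) V1ᶜ V1ᶜ x x).symm
    have hge : (0:ℝ) ≤ x ⬝ᵥ ((lap W).submatrix (Subtype.val : ↥(V1ᶜ : Finset n) → n)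
        (Subtype.val : ↥(V1ᶜ : Finset n) → n) *ᵥ x) := by
      rw [hq]; exact lap_psd W hsymm hnonneg _
    rcases hge.lt_or_eq with h | h
    · exact h
    · exfalso
      have hker := lap_kernel_const W hsymm hnonneg hconn (x := pad V1ᶜ x) (by rw [← hq, ← h])
      obtain ⟨i0, hi0⟩ := h1
      have hz : pad V1ᶜ x i0 = 0 := by
        have : i0 ∉ (V1ᶜ : Finset n) := by simp [hi0]
        exact dif_neg this
      have : x = 0 := by
        apply pad_eq_zero (S := V1ᶜ)
        ext j
        rw [hker j i0, hz]
        rfl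
      exact hx this

end Schur

section Schur2
variable {n : Type*} [Fintype n] [DecidableEq n]
variable {W : Matrix n n ℝ} (V1 : Finset n)

-- abbreviations (as defs to keep statements readable)
variable (W) in
noncomputable def blkA : Matrix ↥(V1ᶜ : Finset n) ↥(V1ᶜ : Finset n) ℝ :=
  (lap W).submatrix Subtype.val Subtype.val
variable (W) in
noncomputable def blkC : Matrix ↥(V1ᶜ : Finset n) ↥V1 ℝ :=
  (lap W).submatrix Subtype.val Subtype.val
variable (W) in
noncomputable def blkB : Matrix ↥V1 ↥(V1ᶜ : Finset n) ℝ :=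
  (lap W).submatrix Subtype.val Subtype.val
variable (W) in
noncomputable def blkD : Matrix ↥V1 ↥V1 ℝ :=
  (lap W).submatrix Subtype.val Subtype.val

lemma kron_eq : kron (lap W) V1 = blkD W V1 - blkB W V1 * (blkA W V1)⁻¹ * blkC W V1 := rfl

lemma blkB_eq_transpose (hsymm : W.IsSymm) : blkB W V1 = (blkC W V1)ᵀ := by
  rw [blkC, blkB, transpose_submatrix, (lap_isSymm W hsymm).eq]

lemma blkA_symm (hsymm : W.IsSymm) : (blkA W V1)ᵀ = blkA W V1 := by
  rw [blkA, transpose_submatrix, (lap_isSymm W hsymm).eq]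

lemma blkD_symm (hsymm : W.IsSymm) : (blkD W V1)ᵀ = blkD W V1 := by
  rw [blkD, transpose_submatrix, (lap_isSymm W hsymm).eq]

lemma kron_isHermitian (hsymm : W.IsSymm) : (kron (lap W) V1).IsHermitian := by
  apply isHermitian_of_isSymm
  rw [Matrix.IsSymm, kron_eq, transpose_sub, blkD_symm V1 hsymm, transpose_mul, transpose_mul,
    transpose_nonsing_inv, blkA_symm V1 hsymm, ← blkB_eq_transpose V1 hsymm]
  rw [blkB_eq_transpose V1 hsymm, transpose_transpose, Matrix.mul_assoc]

/-- The Schur-complement quadratic identity. -/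
lemma quad_psi (hsymm : W.IsSymm) (hunit : IsUnit (blkA W V1).det) (x : ↥V1 → ℝ) :
    (pad V1 x + pad V1ᶜ ((-((blkA W V1)⁻¹ * blkC W V1)) *ᵥ x)) ⬝ᵥ
      (lap W *ᵥ (pad V1 x + pad V1ᶜ ((-((blkA W V1)⁻¹ * blkC W V1)) *ᵥ x))) =
    x ⬝ᵥ (kron (lap W) V1 *ᵥ x) := by
  set y : ↥(V1ᶜ : Finset n) → ℝ := (-((blkA W V1)⁻¹ * blkC W V1)) *ᵥ x with hy
  have hAy : blkA W V1 *ᵥ y = -(blkC W V1 *ᵥ x) := by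
    rw [hy, mulVec_mulVec, Matrix.mul_neg, ← Matrix.mul_assoc,
      Matrix.mul_nonsing_inv _ hunit, Matrix.one_mul, neg_mulVec]
  have hBy : blkB W V1 *ᵥ y = -((blkB W V1 * (blkA W V1)⁻¹ * blkC W V1) *ᵥ x) := by
    rw [hy, mulVec_mulVec, Matrix.mul_neg, neg_mulVec, Matrix.mul_assoc]
  have hexp : (pad V1 x + pad V1ᶜ y) ⬝ᵥ (lap W *ᵥ (pad V1 x + pad V1ᶜ y)) =
      (x ⬝ᵥ (blkD W V1 *ᵥ x) + y ⬝ᵥ (blkC W V1 *ᵥ x))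
        + (x ⬝ᵥ (blkB W V1 *ᵥ y) + y ⬝ᵥ (blkA W V1 *ᵥ y)) := by
    rw [mulVec_add, dotProduct_add, add_dotProduct, add_dotProduct,
      pad_quad, pad_quad, pad_quad, pad_quad]
    rfl
  rw [hexp, hAy, hBy, kron_eq, sub_mulVec, dotProduct_sub, dotProduct_neg, dotProduct_neg]
  ring

lemma quad_kron_le_blkD (hsymm : W.IsSymm) (hpd : (blkA W V1).PosDef) (x : ↥V1 → ℝ) :
    x ⬝ᵥ (kron (lap W) V1 *ᵥ x) ≤ x ⬝ᵥ (blkD W V1 *ᵥ x) := by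
  have h1 : (blkB W V1 * (blkA W V1)⁻¹ * blkC W V1) *ᵥ x =
      blkB W V1 *ᵥ ((blkA W V1)⁻¹ *ᵥ (blkC W V1 *ᵥ x)) := by
    rw [mulVec_mulVec, mulVec_mulVec]
  have h2 : x ⬝ᵥ (blkB W V1 *ᵥ ((blkA W V1)⁻¹ *ᵥ (blkC W V1 *ᵥ x))) =
      (blkC W V1 *ᵥ x) ⬝ᵥ ((blkA W V1)⁻¹ *ᵥ (blkC W V1 *ᵥ x)) := by
    rw [blkB_eq_transpose V1 hsymm, dotProduct_mulVec, vecMul_transpose]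
  have h3 : 0 ≤ (blkC W V1 *ᵥ x) ⬝ᵥ ((blkA W V1)⁻¹ *ᵥ (blkC W V1 *ᵥ x)) := by
    have := hpd.inv.posSemidef.dotProduct_mulVec_nonneg (blkC W V1 *ᵥ x)
    rwa [star_trivial] at this
  rw [kron_eq, sub_mulVec, dotProduct_sub]
  rw [h1, h2] at *
  linarith

lemma psi_dot (x : ↥V1 → ℝ) (y : ↥(V1ᶜ : Finset n) → ℝ) :
    (pad V1 x + pad V1ᶜ y) ⬝ᵥ (pad V1 x + pad V1ᶜ y) = x ⬝ᵥ x + y ⬝ᵥ y := by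
  have hc : pad V1ᶜ y ⬝ᵥ pad V1 x = 0 := by
    rw [dotProduct_comm]; exact pad_dot_pad_compl V1 x y
  rw [dotProduct_add, add_dotProduct, add_dotProduct, pad_dot_pad, pad_dot_pad,
    pad_dot_pad_compl, hc]
  ring

lemma quad_pad_blkD (x : ↥V1 → ℝ) :
    pad V1 x ⬝ᵥ (lap W *ᵥ pad V1 x) = x ⬝ᵥ (blkD W V1 *ᵥ x) :=
  pad_quad (lap W) V1 V1 x x

end Schur2

section Final
variable {n : Type*} [Fintype n] [DecidableEq n]

lemma dot_self_nonneg (x : n → ℝ) : 0 ≤ x ⬝ᵥ x :=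
  Finset.sum_nonneg fun i _ => mul_self_nonneg _

noncomputable def padLin (S : Finset n) : (↥S → ℝ) →ₗ[ℝ] (n → ℝ) where
  toFun := pad S
  map_add' := pad_add S
  map_smul' := pad_smul S

lemma padLin_injective (S : Finset n) : Function.Injective (padLin S) := by
  intro a b h
  have h0 : padLin S (a - b) = 0 := by rw [map_sub, h, sub_self]
  exact sub_eq_zero.mp (pad_eq_zero h0)

noncomputable def psiLin (W : Matrix n n ℝ) (V1 : Finset n) : (↥V1 → ℝ) →ₗ[ℝ] (n → ℝ) :=
  padLin V1 + (padLin V1ᶜ).comp (Matrix.mulVecLin (-((blkA W V1)⁻¹ * blkC W V1)))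

lemma psiLin_apply (W : Matrix n n ℝ) (V1 : Finset n) (x : ↥V1 → ℝ) :
    psiLin W V1 x = pad V1 x + pad V1ᶜ ((-((blkA W V1)⁻¹ * blkC W V1)) *ᵥ x) := rfl

lemma psiLin_injective (W : Matrix n n ℝ) (V1 : Finset n) :
    Function.Injective (psiLin W V1) := by
  have hz : ∀ x, psiLin W V1 x = 0 → x = 0 := by
    intro x hx
    ext a
    have h1 : pad V1 x a.val = x a := dif_pos a.2
    have h2 : pad V1ᶜ ((-((blkA W V1)⁻¹ * blkC W V1)) *ᵥ x) a.val = 0 :=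
      dif_neg (by simp [a.2])
    have h3 : pad V1 x a.val
        + pad V1ᶜ ((-((blkA W V1)⁻¹ * blkC W V1)) *ᵥ x) a.val = 0 := congrFun hx a.val
    rw [h1, h2, add_zero] at h3
    simpa using h3
  intro a b h
  have h0 : psiLin W V1 (a - b) = 0 := by rw [map_sub, h, sub_self]
  exact sub_eq_zero.mp (hz _ h0)

lemma finrank_map_inj {m : Type*} [Fintype m] (f : (m → ℝ) →ₗ[ℝ] (n → ℝ))
    (hf : Function.Injective f) (p : Submodule ℝ (m → ℝ)) :
    Module.finrank ℝ (p.map f) = Module.finrank ℝ p :=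
  (LinearEquiv.finrank_eq (Submodule.equivMapOfInjective f hf p)).symm

end Final

/-- Spectral interlacing for Kron reduction: for every `ℓ`,
`λ_ℓ(L) ≤ λ_ℓ(K(L,V1)) ≤ λ_{ℓ + N - |V1|}(L)`. -/
theorem kron_reduction_eigenvalue_interlacing
    {N : ℕ} (W : Matrix (Fin N) (Fin N) ℝ)
    (hsymm : W.IsSymm) (hnonneg : ∀ i j, 0 ≤ W i j) (hdiag : ∀ i, W i i = 0)
    (hconn : IsConn W) (V1 : Finset (Fin N)) (h1 : V1.Nonempty) (h2 : V1ᶜ.Nonempty) :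
    ∀ ℓ : Fin (Fintype.card ↥V1),
      sortedEigs (lap W) ⟨ℓ.1, by
          have h := ℓ.2
          simp only [Fintype.card_coe] at h
          simp only [Fintype.card_fin]
          have hle : V1.card ≤ N := by simpa using V1.card_le_univ
          omega⟩ ≤ sortedEigs (kron (lap W) V1) ℓ ∧
      sortedEigs (kron (lap W) V1) ℓ ≤
        sortedEigs (lap W) ⟨ℓ.1 + N - V1.card, by
          have h := ℓ.2
          simp only [Fintype.card_coe] at h
          simp only [Fintype.card_fin]
          have hle : V1.card ≤ N := by simpa using V1.card_le_univ
          omega⟩ := by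
  intro ℓ
  have hle : V1.card ≤ N := by simpa using V1.card_le_univ
  have hcard : Fintype.card ↥V1 = V1.card := Fintype.card_coe V1
  have hℓ : (ℓ : ℕ) < V1.card := by have := ℓ.2; omega
  -- Hermitian facts
  have hLh : (lap W).IsHermitian := lap_isHermitian W hsymm
  have hKh : (kron (lap W) V1).IsHermitian := kron_isHermitian V1 hsymm
  have hBh : (blkD W V1).IsHermitian := hLh.submatrix _
  have hpd : (blkA W V1).PosDef := blockA_posDef hsymm hnonneg hconn V1 h1
  have hunit : IsUnit (blkA W V1).det := hpd.det_pos.ne'.isUnit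
  -- eigensystems
  set esL := IsHermitian.toEigSys hLh with hesL
  set esK := IsHermitian.toEigSys hKh with hesK
  set esB := IsHermitian.toEigSys hBh with hesB
  have monoL := sortedEigs_monotone hLh
  have monoK := sortedEigs_monotone hKh
  have monoB := sortedEigs_monotone hBh
  -- PSD facts
  have hKquad : ∀ x : ↥V1 → ℝ, x ⬝ᵥ (kron (lap W) V1 *ᵥ x) =
      (psiLin W V1 x) ⬝ᵥ (lap W *ᵥ (psiLin W V1 x)) := fun x =>
    (quad_psi V1 hsymm hunit x).symm
  have hKpsd : ∀ x : ↥V1 → ℝ, 0 ≤ x ⬝ᵥ (kron (lap W) V1 *ᵥ x) := fun x => by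
    rw [hKquad x]; exact lap_psd W hsymm hnonneg _
  have hKnn : 0 ≤ sortedEigs (kron (lap W) V1) ℓ := esK.nonneg hKpsd ℓ
  constructor
  · -- λ_ℓ(L) ≤ λ_ℓ(K)
    apply esL.cf_le monoL rfl _ _
      (Submodule.map (psiLin W V1)
        (Submodule.span ℝ (esK.v '' ((Finset.Iic ℓ : Finset _) : Set _))))
    · rw [finrank_map_inj _ (psiLin_injective W V1), esK.finrank_span, Fin.card_Iic]
    · intro z hz
      obtain ⟨x, hx, rfl⟩ := Submodule.mem_map.mp hz
      have e1 : (psiLin W V1 x) ⬝ᵥ (lap W *ᵥ (psiLin W V1 x)) =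
          x ⬝ᵥ (kron (lap W) V1 *ᵥ x) := (hKquad x).symm
      have e2 : x ⬝ᵥ (kron (lap W) V1 *ᵥ x) ≤
          sortedEigs (kron (lap W) V1) ℓ * (x ⬝ᵥ x) :=
        esK.quad_le_on_span monoK ℓ hx
      have e3 : x ⬝ᵥ x ≤ (psiLin W V1 x) ⬝ᵥ (psiLin W V1 x) := by
        rw [psiLin_apply, psi_dot]
        have := dot_self_nonneg ((-((blkA W V1)⁻¹ * blkC W V1)) *ᵥ x)
        linarith
      calc (psiLin W V1 x) ⬝ᵥ (lap W *ᵥ (psiLin W V1 x))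
          ≤ sortedEigs (kron (lap W) V1) ℓ * (x ⬝ᵥ x) := by rw [e1]; exact e2
        _ ≤ sortedEigs (kron (lap W) V1) ℓ * ((psiLin W V1 x) ⬝ᵥ (psiLin W V1 x)) :=
            mul_le_mul_of_nonneg_left e3 hKnn
  · -- λ_ℓ(K) ≤ λ_{ℓ+N-m}(L)
    have step1 : sortedEigs (kron (lap W) V1) ℓ ≤ sortedEigs (blkD W V1) ℓ := by
      apply esK.cf_le monoK rfl ℓ _
        (Submodule.span ℝ (esB.v '' ((Finset.Iic ℓ : Finset _) : Set _)))
      · rw [esB.finrank_span, Fin.card_Iic]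
      · intro x hx
        exact (quad_kron_le_blkD V1 hsymm hpd x).trans (esB.quad_le_on_span monoB ℓ hx)
    have step2 : sortedEigs (blkD W V1) ℓ ≤ sortedEigs (lap W) ⟨ℓ.1 + N - V1.card, by
        simp only [Fintype.card_fin]; omega⟩ := by
      apply esL.cf_ge monoL rfl _ _
        (Submodule.map (padLin V1)
          (Submodule.span ℝ (esB.v '' ((Finset.Ici ℓ : Finset _) : Set _))))
      · rw [finrank_map_inj _ (padLin_injective V1), esB.finrank_span, Fin.card_Ici]
        simp only [Fintype.card_fin]
        omega
      · intro z hz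
        obtain ⟨x, hx, rfl⟩ := Submodule.mem_map.mp hz
        have e1 : (padLin V1 x) ⬝ᵥ (padLin V1 x) = x ⬝ᵥ x := pad_dot_pad V1 x x
        have e2 : sortedEigs (blkD W V1) ℓ * (x ⬝ᵥ x) ≤ x ⬝ᵥ (blkD W V1 *ᵥ x) :=
          esB.quad_ge_on_span monoB ℓ hx
        have e3 : (padLin V1 x) ⬝ᵥ (lap W *ᵥ (padLin V1 x)) = x ⬝ᵥ (blkD W V1 *ᵥ x) :=
          quad_pad_blkD V1 x
        rw [e1, e3]
        exact e2
    exact step1.trans step2
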